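/- arXiv:2310.17350 — 3 statements merged into one kernel-verified Lean document; each statement's English description precedes it below -/
import Mathlib

section
/- Weakly singular Gronwall inequality (discrete convolution quadrature version): let 0<α<1, M≥0 and T>0. There exists a constant C>0, depending only on α, M and T, with the following property: for every integer N≥1 and τ=T/N with Mτ^α ≤ 1/2, if (y_n)_{n=0}^N are nonnegative reals and (f_n)_{n=0}^N are nonnegative and nondecreasing in n, and y_n ≤ f_n + M τ^α Σ_{j=0}^n a_{n−j}^{(−α)} y_j for all 0≤n≤N, then y_n ≤ C f_n for all 0≤n≤N. -/
open Finset Real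

/-- The convolution quadrature weight `a_j^{(β)} = (-1)^j (β choose j)`, where
`(β choose j) = β(β-1)⋯(β-j+1)/j!` is the generalized binomial coefficient. -/
noncomputable def cqWeight (β : ℝ) (j : ℕ) : ℝ :=
  (-1) ^ j * ((∏ i ∈ Finset.range j, (β - i)) / (j.factorial : ℝ))

/-! ### Auxiliary development: the positive weights `w_s(j) = [ξ^j] (1-ξ)^{-s}`. -/

noncomputable def cqW (s : ℝ) (j : ℕ) : ℝ := (∏ i ∈ Finset.range j, (s + i)) / j.factorial

lemma cqW_zero (s : ℝ) : cqW s 0 = 1 := by simp [cqW]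

lemma cqW_nonneg {s : ℝ} (hs : 0 ≤ s) (j : ℕ) : 0 ≤ cqW s j := by
  apply div_nonneg _ (by positivity)
  exact Finset.prod_nonneg fun i _ => by positivity

lemma cqW_one (j : ℕ) : cqW 1 j = 1 := by
  have h : ∏ i ∈ Finset.range j, ((1:ℝ) + i) = j.factorial := by
    induction j with
    | zero => simp
    | succ n ih => rw [Finset.prod_range_succ, ih]; push_cast [Nat.factorial_succ]; ring
  simp [cqW, h, Nat.factorial_ne_zero, div_self]

lemma cqW_succ (s : ℝ) (j : ℕ) : ((j:ℝ)+1) * cqW s (j+1) = (s + j) * cqW s j := by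
  have hj1 : ((j+1).factorial : ℝ) = ((j:ℝ)+1) * j.factorial := by
    push_cast [Nat.factorial_succ]; ring
  rw [cqW, cqW, Finset.prod_range_succ, hj1]
  have hj : (j.factorial : ℝ) ≠ 0 := by exact_mod_cast j.factorial_ne_zero
  field_simp

lemma cq_eq (α : ℝ) (j : ℕ) : cqWeight (-α) j = cqW α j := by
  rw [cqWeight, cqW]
  have h : ∏ i ∈ range j, (-α - (i:ℝ)) = (-1)^j * ∏ i ∈ range j, (α + (i:ℝ)) := by
    induction j with
    | zero => simp
    | succ n ih => rw [Finset.prod_range_succ, Finset.prod_range_succ, ih]; ring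
  have hone : ((-1:ℝ)^j) * ((-1:ℝ)^j) = 1 := by
    rw [← pow_add]; exact Even.neg_one_pow ⟨j, rfl⟩
  rw [h, mul_div_assoc, ← mul_assoc, hone, one_mul]

/-- Vandermonde-type convolution identity for the weights. -/
lemma cqW_vdm (s t : ℝ) : ∀ n : ℕ, ∑ j ∈ range (n+1), cqW s j * cqW t (n - j) = cqW (s+t) n := by
  intro n
  induction n with
  | zero => simp [cqW_zero]
  | succ n ih =>
    have hne : ((n:ℝ)+1) ≠ 0 := by positivity
    have key : ((n:ℝ)+1) * ∑ j ∈ range (n+1+1), cqW s j * cqW t (n+1-j)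
        = ((n:ℝ)+1) * cqW (s+t) (n+1) := by
      rw [Finset.mul_sum]
      have hsplit : ∀ j ∈ range (n+1+1), ((n:ℝ)+1) * (cqW s j * cqW t (n+1-j))
          = (j:ℝ) * cqW s j * cqW t (n+1-j) + ((n+1-j : ℕ):ℝ) * cqW t (n+1-j) * cqW s j := by
        intro j hj
        have hjle : j ≤ n+1 := Nat.lt_succ_iff.mp (Finset.mem_range.mp hj)
        have : ((n+1-j : ℕ):ℝ) = ((n:ℝ)+1) - j := by
          rw [Nat.cast_sub hjle, Nat.cast_add, Nat.cast_one]
        rw [this]; ring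
      rw [Finset.sum_congr rfl hsplit, Finset.sum_add_distrib]
      have h1 : ∑ j ∈ range (n+1+1), (j:ℝ) * cqW s j * cqW t (n+1-j)
          = ∑ i ∈ range (n+1), (s + i) * cqW s i * cqW t (n-i) := by
        rw [Finset.sum_range_succ']
        simp only [Nat.cast_zero, zero_mul]
        rw [add_zero]
        apply Finset.sum_congr rfl
        intro i hi
        have h2 : n + 1 - (i+1) = n - i := by omega
        rw [h2]
        have := cqW_succ s i
        push_cast
        rw [this]
      have h2 : ∑ j ∈ range (n+1+1), ((n+1-j : ℕ):ℝ) * cqW t (n+1-j) * cqW s j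
          = ∑ j ∈ range (n+1), (t + ((n-j : ℕ):ℝ)) * cqW t (n-j) * cqW s j := by
        rw [Finset.sum_range_succ]
        simp only [Nat.sub_self, Nat.cast_zero, zero_mul]
        rw [add_zero]
        apply Finset.sum_congr rfl
        intro j hj
        have hjle : j ≤ n := Nat.lt_succ_iff.mp (Finset.mem_range.mp hj)
        have h3 : n + 1 - j = (n - j) + 1 := by omega
        rw [h3]
        have := cqW_succ t (n - j)
        push_cast
        rw [this]
      rw [h1, h2, ← Finset.sum_add_distrib]
      have h4 : ∀ j ∈ range (n+1), (s + j) * cqW s j * cqW t (n-j)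
            + (t + ((n-j : ℕ):ℝ)) * cqW t (n-j) * cqW s j
          = (s + t + n) * (cqW s j * cqW t (n-j)) := by
        intro j hj
        have hjle : j ≤ n := Nat.lt_succ_iff.mp (Finset.mem_range.mp hj)
        have : ((n-j : ℕ):ℝ) = (n:ℝ) - j := by
          rw [Nat.cast_sub hjle]
        rw [this]; ring
      rw [Finset.sum_congr rfl h4, ← Finset.mul_sum, ih]
      have := cqW_succ (s+t) n
      linarith [this]
    exact mul_left_cancel₀ hne key

/-! ### Analytic bounds. -/

lemma prod_cast_factorial (k : ℕ) : ∏ i ∈ range k, ((i:ℝ)+1) = k.factorial := by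
  induction k with
  | zero => simp
  | succ n ih => rw [Finset.prod_range_succ, ih]; push_cast [Nat.factorial_succ]; ring

lemma harmonic_le_log {m : ℕ} (hm : 1 ≤ m) :
    ∀ n, m ≤ n → ∑ i ∈ Ico m n, (1:ℝ)/((i:ℝ)+1) ≤ Real.log n - Real.log m := by
  intro n
  induction n with
  | zero => intro h; interval_cases m <;> simp
  | succ n ih =>
    intro hmn
    rcases Nat.lt_or_ge n m with h | h
    · have : m = n + 1 := by omega
      subst this; simp
    · have hn0 : (0:ℝ) < n := by
        have : 1 ≤ n := le_trans hm h
        exact_mod_cast this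
      have step : (1:ℝ)/((n:ℝ)+1) ≤ Real.log (n+1) - Real.log n := by
        have hq : (0:ℝ) < (n:ℝ)/((n:ℝ)+1) := by positivity
        have := Real.log_le_sub_one_of_pos hq
        rw [Real.log_div (ne_of_gt hn0) (by positivity)] at this
        have harith : (n:ℝ)/((n:ℝ)+1) - 1 = -(1/((n:ℝ)+1)) := by field_simp; ring
        rw [harith] at this
        linarith
      rw [Finset.sum_Ico_succ_top h]
      have := ih h
      push_cast
      push_cast at this step
      linarith

lemma pow_self_div_factorial_le (m : ℕ) : (m:ℝ)^m / m.factorial ≤ Real.exp 1 ^ m := by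
  have h1 : (m:ℝ)^m / m.factorial ≤ ∑ i ∈ range (m+1), (m:ℝ)^i / i.factorial := by
    have := Finset.single_le_sum (f := fun i => (m:ℝ)^i / i.factorial)
      (fun i _ => by positivity) (Finset.self_mem_range_succ m)
    simpa using this
  have h2 := Real.sum_le_exp_of_nonneg (x := (m:ℝ)) (by positivity) (m+1)
  have h3 : Real.exp (m:ℝ) = Real.exp 1 ^ m := by
    rw [← Real.exp_nat_mul]; ring_nf
  calc (m:ℝ)^m / m.factorial ≤ ∑ i ∈ range (m+1), (m:ℝ)^i / i.factorial := h1
    _ ≤ Real.exp (m:ℝ) := by simpa using h2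
    _ = Real.exp 1 ^ m := h3

lemma cqW_upper {s : ℝ} {m n : ℕ} (hs0 : 0 < s) (hsm : s ≤ m) (hm : 1 ≤ m) (hmn : m ≤ n) :
    cqW (s+1) n ≤ (2*(m:ℝ))^m / m.factorial * Real.exp (s * (Real.log n - Real.log m)) := by
  have hm0 : (0:ℝ) < m := by exact_mod_cast hm
  have hmfac : (0:ℝ) < m.factorial := by exact_mod_cast m.factorial_pos
  have hnfac : (0:ℝ) < n.factorial := by exact_mod_cast n.factorial_pos
  have hsplit : ∏ i ∈ range n, (s+1+(i:ℝ))
      = (∏ i ∈ Ico 0 m, (s+1+(i:ℝ))) * ∏ i ∈ Ico m n, (s+1+(i:ℝ)) := by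
    rw [Finset.prod_Ico_consecutive _ (Nat.zero_le m) hmn, Finset.range_eq_Ico]
  have h1 : ∏ i ∈ Ico 0 m, (s+1+(i:ℝ)) ≤ (2*(m:ℝ))^m := by
    have := Finset.prod_le_prod (f := fun i : ℕ => s+1+(i:ℝ)) (g := fun _ => 2*(m:ℝ))
      (s := Ico 0 m) (fun i _ => by positivity)
      (fun i hi => by
        have h1 : i < m := (Finset.mem_Ico.mp hi).2
        have h2 : (i:ℝ) ≤ (m:ℝ) - 1 := by exact_mod_cast Nat.le_sub_one_of_lt h1
        show s+1+(i:ℝ) ≤ 2*(m:ℝ)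
        linarith)
    simpa [Finset.prod_const, Nat.card_Ico] using this
  have h2 : ∏ i ∈ Ico m n, (s+1+(i:ℝ))
      ≤ (∏ i ∈ Ico m n, ((i:ℝ)+1)) * Real.exp (s * (Real.log n - Real.log m)) := by
    have hstep : ∏ i ∈ Ico m n, (s+1+(i:ℝ))
        ≤ ∏ i ∈ Ico m n, (((i:ℝ)+1) * Real.exp (s/((i:ℝ)+1))) := by
      apply Finset.prod_le_prod (fun i _ => by positivity)
      intro i _
      have hi1 : (0:ℝ) < (i:ℝ)+1 := by positivity
      have h := Real.add_one_le_exp (s/((i:ℝ)+1))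
      have := mul_le_mul_of_nonneg_left h (le_of_lt hi1)
      have heq : ((i:ℝ)+1) * (s/((i:ℝ)+1) + 1) = s + 1 + (i:ℝ) := by field_simp; ring
      linarith [heq ▸ this]
    rw [Finset.prod_mul_distrib, ← Real.exp_sum] at hstep
    refine hstep.trans ?_
    apply mul_le_mul_of_nonneg_left _ (Finset.prod_nonneg (fun i _ => by positivity))
    apply Real.exp_le_exp.mpr
    have : ∑ i ∈ Ico m n, s/((i:ℝ)+1) = s * ∑ i ∈ Ico m n, (1:ℝ)/((i:ℝ)+1) := by
      rw [Finset.mul_sum]; apply Finset.sum_congr rfl; intro i _; field_simp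
    rw [this]
    exact mul_le_mul_of_nonneg_left (harmonic_le_log hm n hmn) (le_of_lt hs0)
  have h3 : ∏ i ∈ Ico m n, ((i:ℝ)+1) = (n.factorial : ℝ) / m.factorial := by
    have h := Finset.prod_Ico_consecutive (fun i : ℕ => (i:ℝ)+1) (Nat.zero_le m) hmn
    have hm' : ∏ i ∈ Ico 0 m, ((i:ℝ)+1) = (m.factorial : ℝ) := by
      rw [← Finset.range_eq_Ico]; exact prod_cast_factorial m
    have hn' : ∏ i ∈ Ico 0 n, ((i:ℝ)+1) = (n.factorial : ℝ) := by
      rw [← Finset.range_eq_Ico]; exact prod_cast_factorial n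
    rw [hm', hn'] at h
    field_simp
    linarith [h]
  have htotal : ∏ i ∈ range n, (s+1+(i:ℝ))
      ≤ (2*(m:ℝ))^m * ((n.factorial : ℝ) / m.factorial * Real.exp (s * (Real.log n - Real.log m))) := by
    rw [hsplit, ← h3]
    have hB0 : 0 ≤ ∏ i ∈ Ico m n, (s+1+(i:ℝ)) := Finset.prod_nonneg (fun i _ => by positivity)
    calc (∏ i ∈ Ico 0 m, (s+1+(i:ℝ))) * ∏ i ∈ Ico m n, (s+1+(i:ℝ))
        ≤ (2*(m:ℝ))^m * ∏ i ∈ Ico m n, (s+1+(i:ℝ)) := by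
          exact mul_le_mul_of_nonneg_right h1 hB0
      _ ≤ (2*(m:ℝ))^m * ((∏ i ∈ Ico m n, ((i:ℝ)+1)) * Real.exp (s * (Real.log n - Real.log m))) := by
          exact mul_le_mul_of_nonneg_left h2 (by positivity)
  have hprodeq : cqW (s+1) n = (∏ i ∈ range n, (s+1+(i:ℝ))) / n.factorial := rfl
  rw [hprodeq, div_le_iff₀ hnfac]
  calc ∏ i ∈ range n, (s+1+(i:ℝ))
      ≤ (2*(m:ℝ))^m * ((n.factorial : ℝ) / m.factorial * Real.exp (s * (Real.log n - Real.log m))) := htotal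
    _ = (2*(m:ℝ))^m / m.factorial * Real.exp (s * (Real.log n - Real.log m)) * n.factorial := by
        field_simp

lemma key_bound {α M T : ℝ} (hα0 : 0 < α) (hα1 : α < 1) (hM : 0 ≤ M) (hT : 0 < T)
    {N m n : ℕ} (hN : 1 ≤ N) (hm : 1 ≤ m) (hmn : m ≤ n) (hnN : n ≤ N) :
    (2 * (M * (T/(N:ℝ))^α))^m * cqW ((m:ℝ)*α+1) n
      ≤ (4 * Real.exp 1 * M * T^α / (m:ℝ)^α)^m := by
  set τ := T/(N:ℝ) with hτdef
  have hN0 : (0:ℝ) < N := by exact_mod_cast hN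
  have hτ0 : 0 < τ := by positivity
  have hn1 : 1 ≤ n := hm.trans hmn
  have hn0 : (0:ℝ) < n := by exact_mod_cast hn1
  have hm0 : (0:ℝ) < m := by exact_mod_cast hm
  have hs0 : 0 < (m:ℝ)*α := by positivity
  have hsm : (m:ℝ)*α ≤ m := by nlinarith
  have hW := cqW_upper hs0 hsm hm hmn
  have hτα : (0:ℝ) < τ ^ α := Real.rpow_pos_of_pos hτ0 α
  have step1 : (2 * (M * τ^α))^m * cqW ((m:ℝ)*α+1) n
      ≤ (2 * (M * τ^α))^m * ((2*(m:ℝ))^m / m.factorial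
          * Real.exp ((m:ℝ)*α * (Real.log n - Real.log m))) := by
    have h0 : 0 ≤ (2 * (M * τ^α))^m := by positivity
    exact mul_le_mul_of_nonneg_left hW h0
  have hfac : (0:ℝ) < m.factorial := by exact_mod_cast m.factorial_pos
  have key2 : (2 * (M * τ^α))^m * ((2*(m:ℝ))^m / m.factorial
          * Real.exp ((m:ℝ)*α * (Real.log n - Real.log m)))
      ≤ (4 * Real.exp 1 * M * T^α / (m:ℝ)^α)^m := by
    have e1 : (2 * (M * τ^α))^m = 2^m * M^m * (τ^α)^m := by rw [mul_pow, mul_pow]; ring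
    have e2 : (2*(m:ℝ))^m = 2^m * (m:ℝ)^m := by rw [mul_pow]
    have e3 : (τ^α)^m * Real.exp ((m:ℝ)*α * (Real.log n - Real.log m))
        = Real.exp ((m:ℝ)*α * (Real.log τ + Real.log n - Real.log m)) := by
      rw [Real.rpow_def_of_pos hτ0, ← Real.exp_nat_mul, ← Real.exp_add]
      ring_nf
    have e4 : Real.log τ + Real.log n ≤ Real.log T := by
      have hτn : τ * n ≤ T := by
        rw [hτdef]
        rw [div_mul_eq_mul_div, div_le_iff₀ hN0]
        have : (n:ℝ) ≤ N := by exact_mod_cast hnN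
        nlinarith
      have := Real.log_le_log (by positivity) hτn
      rwa [Real.log_mul (ne_of_gt hτ0) (ne_of_gt hn0)] at this
    have e5 : Real.exp ((m:ℝ)*α * (Real.log τ + Real.log n - Real.log m))
        ≤ Real.exp ((m:ℝ)*α * (Real.log T - Real.log m)) := by
      apply Real.exp_le_exp.mpr
      apply mul_le_mul_of_nonneg_left _ (le_of_lt hs0)
      linarith
    have e6 : Real.exp ((m:ℝ)*α * (Real.log T - Real.log m)) = (T^α / (m:ℝ)^α)^m := by
      rw [← Real.rpow_natCast (T^α / (m:ℝ)^α) m]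
      rw [Real.rpow_def_of_pos (by positivity)]
      congr 1
      rw [Real.log_div (by positivity) (by positivity),
          Real.log_rpow hT, Real.log_rpow hm0]
      ring
    have e7 : (4 * Real.exp 1 * M * T^α / (m:ℝ)^α)^m
        = 2^m * M^m * (2^m * Real.exp 1 ^ m) * (T^α/(m:ℝ)^α)^m := by
      rw [show (4 : ℝ) * Real.exp 1 * M * T^α / (m:ℝ)^α
            = (2 * M * (2 * Real.exp 1)) * (T^α/(m:ℝ)^α) by ring]
      rw [mul_pow, mul_pow, mul_pow]
      ring
    calc (2 * (M * τ^α))^m * ((2*(m:ℝ))^m / m.factorial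
          * Real.exp ((m:ℝ)*α * (Real.log n - Real.log m)))
        = (2^m * M^m * (2^m * ((m:ℝ)^m / m.factorial)))
            * ((τ^α)^m * Real.exp ((m:ℝ)*α * (Real.log n - Real.log m))) := by
          rw [e1, e2]; ring
      _ ≤ (2^m * M^m * (2^m * Real.exp 1 ^ m))
            * ((τ^α)^m * Real.exp ((m:ℝ)*α * (Real.log n - Real.log m))) := by
          gcongr
          exact pow_self_div_factorial_le m
      _ ≤ (2^m * M^m * (2^m * Real.exp 1 ^ m)) * (T^α/(m:ℝ)^α)^m := by
          apply mul_le_mul_of_nonneg_left _ (by positivity)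
          rw [e3, ← e6]
          exact e5
      _ = (4 * Real.exp 1 * M * T^α / (m:ℝ)^α)^m := by rw [e7]
  exact step1.trans key2

lemma tail_bound {α A : ℝ} (hα0 : 0 < α) (hA0 : 0 ≤ A) {m : ℕ} (hm : 1 ≤ m) :
    (A / (m:ℝ)^α)^m ≤ (max 1 A)^(⌈(2*A)^(1/α)⌉₊+1) * 2^(⌈(2*A)^(1/α)⌉₊+1) * (1/2)^m := by
  set K := ⌈(2*A)^(1/α)⌉₊+1 with hK
  have hm0 : (0:ℝ) < m := by exact_mod_cast hm
  have hmα1 : (1:ℝ) ≤ (m:ℝ)^α := by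
    apply Real.one_le_rpow (by exact_mod_cast hm) (le_of_lt hα0)
  have hdiv0 : 0 ≤ A / (m:ℝ)^α := by positivity
  rcases le_or_gt m K with hmK | hKm
  · have h1 : A / (m:ℝ)^α ≤ max 1 A := le_trans (div_le_self hA0 hmα1) (le_max_right 1 A)
    have h2 : (A/(m:ℝ)^α)^m ≤ (max 1 A)^m := pow_le_pow_left₀ hdiv0 h1 m
    have h3 : (max 1 A)^m ≤ (max 1 A)^K := pow_le_pow_right₀ (le_max_left 1 A) hmK
    have h4 : (1:ℝ) ≤ 2^K * (1/2)^m := by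
      rw [one_div, inv_pow, ← div_eq_mul_inv, le_div_iff₀ (by positivity), one_mul]
      exact pow_le_pow_right₀ (by norm_num) hmK
    calc (A/(m:ℝ)^α)^m ≤ (max 1 A)^K := h2.trans h3
      _ = (max 1 A)^K * 1 := by ring
      _ ≤ (max 1 A)^K * (2^K * (1/2)^m) := by
          apply mul_le_mul_of_nonneg_left h4 (by positivity)
      _ = (max 1 A)^K * 2^K * (1/2)^m := by ring
  · have hceil : (2*A)^(1/α) ≤ (K:ℝ) := by
      have := Nat.le_ceil ((2*A)^(1/α))
      have h2 : (⌈(2*A)^(1/α)⌉₊ : ℝ) ≤ K := by exact_mod_cast Nat.le_succ _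
      linarith
    have hmK' : (2*A)^(1/α) ≤ (m:ℝ) := le_trans hceil (by exact_mod_cast le_of_lt hKm)
    have h2A : 2*A ≤ (m:ℝ)^α := by
      have := Real.rpow_le_rpow (Real.rpow_nonneg (by linarith) _) hmK' (le_of_lt hα0)
      rwa [← Real.rpow_mul (by linarith), one_div, inv_mul_cancel₀ (ne_of_gt hα0),
        Real.rpow_one] at this
    have h1 : A / (m:ℝ)^α ≤ 1/2 := by
      rw [div_le_iff₀ (by positivity)]
      linarith
    have h2 : (A/(m:ℝ)^α)^m ≤ (1/2)^m := pow_le_pow_left₀ hdiv0 h1 m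
    have hB1 : (1:ℝ) ≤ (max 1 A)^K * 2^K := by
      have a1 : (1:ℝ) ≤ (max 1 A)^K := by
        have := pow_le_pow_left₀ (zero_le_one) (le_max_left 1 A) K; simpa using this
      have a2 : (1:ℝ) ≤ 2^K := by
        have := pow_le_pow_left₀ (zero_le_one) (by norm_num : (1:ℝ) ≤ 2) K; simpa using this
      nlinarith
    calc (A/(m:ℝ)^α)^m ≤ (1/2)^m := h2
      _ = 1 * (1/2)^m := by ring
      _ ≤ (max 1 A)^K * 2^K * (1/2)^m := by
          apply mul_le_mul_of_nonneg_right hB1 (by positivity)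

/-- Weakly singular Gronwall inequality, discrete convolution quadrature version. -/
theorem stmt14 (α M T : ℝ) (hα0 : 0 < α) (hα1 : α < 1) (hM : 0 ≤ M) (hT : 0 < T) :
    ∃ C > 0, ∀ N : ℕ, 1 ≤ N →
      M * (T / N) ^ α ≤ 1 / 2 →
      ∀ y f : ℕ → ℝ,
        (∀ n ≤ N, 0 ≤ y n) →
        (∀ n ≤ N, 0 ≤ f n) →
        (∀ m n, m ≤ n → n ≤ N → f m ≤ f n) →
        (∀ n ≤ N, y n ≤ f n +
          M * (T / N) ^ α * ∑ j ∈ Finset.range (n + 1), cqWeight (-α) (n - j) * y j) →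
        ∀ n ≤ N, y n ≤ C * f n := by
  classical
  set A := 4 * Real.exp 1 * M * T ^ α with hAdef
  have hA0 : 0 ≤ A := by
    rw [hAdef]
    exact mul_nonneg (mul_nonneg (by positivity) hM) (Real.rpow_nonneg (le_of_lt hT) α)
  set K := ⌈(2*A) ^ (1/α)⌉₊ + 1 with hKdef
  set B := (max 1 A) ^ K * 2 ^ K with hBdef
  have hB1 : (1:ℝ) ≤ B := by
    rw [hBdef]
    have a1 : (1:ℝ) ≤ (max 1 A)^K := by
      have := pow_le_pow_left₀ (zero_le_one) (le_max_left 1 A) K; simpa using this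
    have a2 : (1:ℝ) ≤ 2^K := by
      have := pow_le_pow_left₀ (zero_le_one) (by norm_num : (1:ℝ) ≤ 2) K; simpa using this
    nlinarith
  refine ⟨2 * (1 + 2 * B), by nlinarith, ?_⟩
  intro N hN hsmall y f hy hf hmono hrec
  have hN0 : (0:ℝ) < N := by exact_mod_cast hN
  set τ := T / (N:ℝ) with hτdef
  have hτ0 : 0 < τ := by positivity
  have hτα : (0:ℝ) < τ ^ α := Real.rpow_pos_of_pos hτ0 α
  set lam := 2 * (M * τ ^ α) with hlamdef
  have hlam0 : 0 ≤ lam := by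
    rw [hlamdef]
    exact mul_nonneg (by norm_num) (mul_nonneg hM (le_of_lt hτα))
  set S : ℕ → ℝ := fun n => 2 * ∑ k ∈ range (n+1), lam ^ k * cqW ((k:ℝ)*α + 1) n with hSdef
  have hknn : ∀ k : ℕ, (0:ℝ) ≤ (k:ℝ)*α + 1 := by
    intro k
    have : (0:ℝ) ≤ (k:ℝ)*α := mul_nonneg (Nat.cast_nonneg k) (le_of_lt hα0)
    linarith
  have hSnn : ∀ n, 0 ≤ S n := by
    intro n
    apply mul_nonneg (by norm_num)
    apply Finset.sum_nonneg
    intro k _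
    exact mul_nonneg (pow_nonneg hlam0 k) (cqW_nonneg (hknn k) n)
  have hSexp : ∀ n, S n = 2 + 2 * ∑ k ∈ range n, lam^(k+1) * cqW (α + ((k:ℝ)*α + 1)) n := by
    intro n
    have h0 : S n = 2 * ∑ k ∈ range (n+1), lam ^ k * cqW ((k:ℝ)*α + 1) n := rfl
    have hterm : ∀ k : ℕ, cqW ((((k+1:ℕ)):ℝ)*α + 1) n = cqW (α + ((k:ℝ)*α + 1)) n := by
      intro k; congr 1; push_cast; ring
    rw [h0, Finset.sum_range_succ']
    simp only [hterm, pow_zero, Nat.cast_zero, zero_mul, zero_add, cqW_one, one_mul]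
    ring
  have hsuper : ∀ n, 2 + lam * ∑ j ∈ range n, cqW α (n - j) * S j ≤ S n := by
    intro n
    rw [hSexp n]
    have hSj : ∀ j ∈ range n, cqW α (n-j) * S j
        ≤ 2 * ∑ k ∈ range n, lam^k * (cqW ((k:ℝ)*α+1) j * cqW α (n-j)) := by
      intro j hj
      have hjn : j + 1 ≤ n := Finset.mem_range.mp hj
      have h0 : S j = 2 * ∑ k ∈ range (j+1), lam ^ k * cqW ((k:ℝ)*α + 1) j := rfl
      rw [h0]
      have hsub : ∑ k ∈ range (j+1), lam ^ k * cqW ((k:ℝ)*α + 1) j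
          ≤ ∑ k ∈ range n, lam ^ k * cqW ((k:ℝ)*α + 1) j := by
        apply Finset.sum_le_sum_of_subset_of_nonneg (Finset.range_subset_range.mpr hjn)
        intro k _ _
        exact mul_nonneg (pow_nonneg hlam0 k) (cqW_nonneg (hknn k) j)
      have hcnn : 0 ≤ cqW α (n-j) := cqW_nonneg (le_of_lt hα0) _
      calc cqW α (n-j) * (2 * ∑ k ∈ range (j+1), lam ^ k * cqW ((k:ℝ)*α + 1) j)
          ≤ cqW α (n-j) * (2 * ∑ k ∈ range n, lam ^ k * cqW ((k:ℝ)*α + 1) j) := by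
            apply mul_le_mul_of_nonneg_left _ hcnn
            linarith
        _ = 2 * ∑ k ∈ range n, lam^k * (cqW ((k:ℝ)*α+1) j * cqW α (n-j)) := by
            rw [Finset.mul_sum, Finset.mul_sum, Finset.mul_sum]
            apply Finset.sum_congr rfl
            intro k _
            ring
    have alg : ∑ j ∈ range n, lam * (2 * ∑ k ∈ range n, lam^k * (cqW ((k:ℝ)*α+1) j * cqW α (n-j)))
        = 2 * ∑ k ∈ range n, lam^(k+1) * ∑ j ∈ range n, cqW ((k:ℝ)*α+1) j * cqW α (n-j) := by
      have L : ∀ j, lam * (2 * ∑ k ∈ range n, lam^k * (cqW ((k:ℝ)*α+1) j * cqW α (n-j)))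
          = ∑ k ∈ range n, 2 * lam^(k+1) * (cqW ((k:ℝ)*α+1) j * cqW α (n-j)) := by
        intro j
        rw [← mul_assoc, Finset.mul_sum]
        exact Finset.sum_congr rfl (fun k _ => by ring)
      rw [Finset.sum_congr rfl (fun j _ => L j), Finset.sum_comm, Finset.mul_sum]
      apply Finset.sum_congr rfl
      intro k _
      rw [Finset.mul_sum, Finset.mul_sum]
      exact Finset.sum_congr rfl (fun j _ => by ring)
    have h2 : lam * ∑ j ∈ range n, cqW α (n - j) * S j
        ≤ 2 * ∑ k ∈ range n, lam^(k+1) * ∑ j ∈ range n, cqW ((k:ℝ)*α+1) j * cqW α (n-j) := by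
      calc lam * ∑ j ∈ range n, cqW α (n - j) * S j
          ≤ lam * ∑ j ∈ range n, (2 * ∑ k ∈ range n, lam^k * (cqW ((k:ℝ)*α+1) j * cqW α (n-j))) := by
            exact mul_le_mul_of_nonneg_left (Finset.sum_le_sum hSj) hlam0
        _ = ∑ j ∈ range n, lam * (2 * ∑ k ∈ range n, lam^k * (cqW ((k:ℝ)*α+1) j * cqW α (n-j))) := by
            rw [Finset.mul_sum]
        _ = 2 * ∑ k ∈ range n, lam^(k+1) * ∑ j ∈ range n, cqW ((k:ℝ)*α+1) j * cqW α (n-j) := alg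
    have h3 : 2 * ∑ k ∈ range n, lam^(k+1) * ∑ j ∈ range n, cqW ((k:ℝ)*α+1) j * cqW α (n-j)
        ≤ 2 * ∑ k ∈ range n, lam^(k+1) * cqW (α + ((k:ℝ)*α+1)) n := by
      apply mul_le_mul_of_nonneg_left _ (by norm_num)
      apply Finset.sum_le_sum
      intro k _
      apply mul_le_mul_of_nonneg_left _ (pow_nonneg hlam0 _)
      have hsub : ∑ j ∈ range n, cqW ((k:ℝ)*α+1) j * cqW α (n-j)
          ≤ ∑ j ∈ range (n+1), cqW ((k:ℝ)*α+1) j * cqW α (n-j) := by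
        apply Finset.sum_le_sum_of_subset_of_nonneg (Finset.range_subset_range.mpr (Nat.le_succ n))
        intro j _ _
        exact mul_nonneg (cqW_nonneg (hknn k) j) (cqW_nonneg (le_of_lt hα0) _)
      rw [show α + ((k:ℝ)*α+1) = ((k:ℝ)*α+1) + α by ring]
      exact hsub.trans_eq (cqW_vdm ((k:ℝ)*α+1) α n)
    linarith [h2.trans h3]
  have hmain : ∀ n, n ≤ N → y n ≤ f n * S n := by
    intro n
    induction n using Nat.strong_induction_on with
    | _ n ih =>
      intro hn
      have h1 := hrec n hn
      simp only [cq_eq] at h1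
      rw [Finset.sum_range_succ, Nat.sub_self, cqW_zero, one_mul, mul_add] at h1
      have hyn := hy n hn
      have hfn := hf n hn
      have hMt : M * τ^α * y n ≤ (1/2) * y n := mul_le_mul_of_nonneg_right hsmall hyn
      have hstep : y n ≤ 2 * f n + lam * ∑ j ∈ range n, cqW α (n-j) * y j := by
        rw [hlamdef]
        linarith
      have hSb : ∑ j ∈ range n, cqW α (n-j) * y j ≤ ∑ j ∈ range n, cqW α (n-j) * (f n * S j) := by
        apply Finset.sum_le_sum
        intro j hj
        have hjn : j < n := Finset.mem_range.mp hj
        have hjN : j ≤ N := le_trans (le_of_lt hjn) hn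
        have hyj := ih j hjn hjN
        have hfj : f j ≤ f n := hmono j n (le_of_lt hjn) hn
        have h2 : y j ≤ f n * S j :=
          hyj.trans (mul_le_mul_of_nonneg_right hfj (hSnn j))
        exact mul_le_mul_of_nonneg_left h2 (cqW_nonneg (le_of_lt hα0) _)
      have halg : ∑ j ∈ range n, cqW α (n-j) * (f n * S j)
          = f n * ∑ j ∈ range n, cqW α (n-j) * S j := by
        rw [Finset.mul_sum]; exact Finset.sum_congr rfl (fun j _ => by ring)
      have hms : lam * (∑ j ∈ range n, cqW α (n-j) * y j)
          ≤ lam * (f n * ∑ j ∈ range n, cqW α (n-j) * S j) := by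
        rw [← halg]; exact mul_le_mul_of_nonneg_left hSb hlam0
      calc y n ≤ 2 * f n + lam * (f n * ∑ j ∈ range n, cqW α (n-j) * S j) := by linarith
        _ = f n * (2 + lam * ∑ j ∈ range n, cqW α (n-j) * S j) := by ring
        _ ≤ f n * S n := mul_le_mul_of_nonneg_left (hsuper n) hfn
  have hSbound : ∀ n, n ≤ N → S n ≤ 2 * (1 + 2 * B) := by
    intro n hn
    rw [hSexp n]
    have hterm : ∀ k ∈ range n, lam^(k+1) * cqW (α + ((k:ℝ)*α+1)) n ≤ B * (1/2:ℝ)^(k+1) := by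
      intro k hk
      have hk1n : k+1 ≤ n := Finset.mem_range.mp hk
      have harg : α + ((k:ℝ)*α+1) = (((k+1:ℕ)):ℝ)*α + 1 := by push_cast; ring
      rw [harg]
      calc lam^(k+1) * cqW ((((k+1:ℕ)):ℝ)*α + 1) n
          ≤ (A / (((k+1:ℕ)):ℝ)^α)^(k+1) := by
            rw [hlamdef, hτdef, hAdef]
            exact key_bound hα0 hα1 hM hT hN (Nat.le_add_left 1 k) hk1n hn
        _ ≤ (max 1 A)^(⌈(2*A)^(1/α)⌉₊+1) * 2^(⌈(2*A)^(1/α)⌉₊+1) * (1/2)^(k+1) :=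
            tail_bound hα0 hA0 (Nat.le_add_left 1 k)
        _ = B * (1/2:ℝ)^(k+1) := by rw [hBdef, hKdef]
    have hsum : ∑ k ∈ range n, lam^(k+1) * cqW (α + ((k:ℝ)*α+1)) n
        ≤ ∑ k ∈ range n, B * (1/2:ℝ)^(k+1) := Finset.sum_le_sum hterm
    have hB0 : (0:ℝ) ≤ B := le_trans zero_le_one hB1
    have hgeom : ∑ k ∈ range n, B * (1/2:ℝ)^(k+1) ≤ 2 * B := by
      have h1 : ∑ k ∈ range n, B * (1/2:ℝ)^(k+1) = (B/2) * ∑ k ∈ range n, (1/2:ℝ)^k := by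
        rw [Finset.mul_sum]
        exact Finset.sum_congr rfl (fun k _ => by ring)
      have h3 : (0:ℝ) ≤ (1/2:ℝ)^n := by positivity
      have h2 : ∑ k ∈ range n, (1/2:ℝ)^k ≤ 2 := by
        have he : ((1/2:ℝ)^n - 1)/((1/2:ℝ)-1) = 2 - 2*(1/2:ℝ)^n := by ring
        rw [geom_sum_eq (by norm_num : (1/2:ℝ) ≠ 1) n, he]
        linarith
      rw [h1]
      nlinarith
    linarith [hsum.trans hgeom]
  intro n hn
  have hfn := hf n hn
  calc y n ≤ f n * S n := hmain n hn
    _ ≤ f n * (2*(1+2*B)) := mul_le_mul_of_nonneg_left (hSbound n hn) hfn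
    _ = 2*(1+2*B) * f n := by ring
end

section
/- Discrete Cauchy–Schwarz bound for the convolution quadrature fractional integral: let 0<α<1. There exists a constant C>0, depending only on α, such that for every real Hilbert space H, every τ>0, every integer n≥1, and every w_0,…,w_n ∈ H, ‖(∂_τ^{−α} w)^n‖² ≤ C (nτ)^α (∂_τ^{−α} g)^n where g_j=‖w_j‖²; explicitly, ‖τ^α Σ_{j=0}^n a_{n−j}^{(−α)} w_j‖² ≤ C (nτ)^α · τ^α Σ_{j=0}^n a_{n−j}^{(−α)} ‖w_j‖². -/
lemma cqWeight_neg_eq (α : ℝ) (j : ℕ) :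
    cqWeight (-α) j = (∏ i ∈ Finset.range j, (α + i)) / (j.factorial : ℝ) := by
  unfold cqWeight
  have h : (∏ i ∈ Finset.range j, (-α - (i : ℝ)))
      = (-1) ^ j * ∏ i ∈ Finset.range j, (α + i) := by
    calc (∏ i ∈ Finset.range j, (-α - (i : ℝ)))
        = ∏ i ∈ Finset.range j, ((-1) * (α + i)) :=
          Finset.prod_congr rfl fun i _ => by ring
      _ = (-1) ^ j * ∏ i ∈ Finset.range j, (α + i) := by
          rw [Finset.prod_mul_distrib, Finset.prod_const, Finset.card_range]
  rw [h]
  rw [mul_div_assoc, ← mul_assoc, ← mul_pow]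
  norm_num

lemma cqWeight_neg_nonneg {α : ℝ} (hα : 0 < α) (j : ℕ) : 0 ≤ cqWeight (-α) j := by
  rw [cqWeight_neg_eq]
  apply div_nonneg _ (by positivity)
  exact Finset.prod_nonneg fun i _ => by positivity

lemma cqWeight_sum (α : ℝ) (n : ℕ) :
    (n.factorial : ℝ) * ∑ k ∈ Finset.range (n + 1), cqWeight (-α) k
      = ∏ i ∈ Finset.range n, (α + 1 + i) := by
  induction n with
  | zero => simp [cqWeight_neg_eq]
  | succ n ih =>
    rw [Finset.sum_range_succ, mul_add, cqWeight_neg_eq]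
    have h2 : (∏ i ∈ Finset.range (n + 1), (α + (i : ℝ)))
        = α * ∏ i ∈ Finset.range n, (α + 1 + i) := by
      rw [Finset.prod_range_succ']
      simp only [Nat.cast_zero, add_zero]
      rw [mul_comm]
      congr 1
      exact Finset.prod_congr rfl fun i _ => by push_cast; ring
    have hfacpos : (0 : ℝ) < ((n + 1).factorial : ℝ) := by positivity
    rw [h2]
    have hc : ((n + 1).factorial : ℝ)
        * ((α * ∏ i ∈ Finset.range n, (α + 1 + i)) / ((n + 1).factorial : ℝ))
        = α * ∏ i ∈ Finset.range n, (α + 1 + i) := by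
      field_simp
    rw [hc]
    have hd : ((n + 1).factorial : ℝ) * ∑ k ∈ Finset.range (n + 1), cqWeight (-α) k
        = ((n : ℝ) + 1) * ∏ i ∈ Finset.range n, (α + 1 + i) := by
      rw [Nat.factorial_succ]
      push_cast
      rw [mul_assoc, ih]
    rw [hd, Finset.prod_range_succ]
    ring

/-- The partial sums of the weights are bounded by `e · n^α`. -/
lemma cqWeight_sum_le {α : ℝ} (hα0 : 0 < α) (hα1 : α < 1) {n : ℕ} (hn : 1 ≤ n) :
    ∑ k ∈ Finset.range (n + 1), cqWeight (-α) k ≤ Real.exp 1 * (n : ℝ) ^ α := by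
  have hfac : (0 : ℝ) < (n.factorial : ℝ) := by positivity
  have key : ∑ k ∈ Finset.range (n + 1), cqWeight (-α) k
      = ∏ i ∈ Finset.range n, ((α + 1 + i) / (i + 1)) := by
    rw [Finset.prod_div_distrib]
    have : (∏ i ∈ Finset.range n, ((i : ℝ) + 1)) = (n.factorial : ℝ) := by
      rw [← Finset.prod_range_add_one_eq_factorial]
      push_cast
      rfl
    rw [this, ← cqWeight_sum α n, mul_div_cancel_left₀]
    exact hfac.ne'
  rw [key]
  have hstep : ∏ i ∈ Finset.range n, ((α + 1 + i) / (i + 1))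
      ≤ ∏ i ∈ Finset.range n, Real.exp (α / (i + 1)) := by
    apply Finset.prod_le_prod
    · intro i _; positivity
    · intro i _
      have hi : (0 : ℝ) < (i : ℝ) + 1 := by positivity
      rw [div_le_iff₀ hi] at *
      calc α + 1 + (i : ℝ) = (α / ((i : ℝ) + 1) + 1) * ((i : ℝ) + 1) := by
            field_simp; ring
        _ ≤ Real.exp (α / (i + 1)) * ((i : ℝ) + 1) := by
            apply mul_le_mul_of_nonneg_right (Real.add_one_le_exp _) hi.le
  refine hstep.trans ?_
  rw [← Real.exp_sum]
  have hsum : ∑ i ∈ Finset.range n, α / ((i : ℝ) + 1) = α * (harmonic n : ℝ) := by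
    rw [harmonic]
    push_cast
    rw [Finset.mul_sum]
    exact Finset.sum_congr rfl fun i _ => by rw [div_eq_mul_inv]
  rw [hsum]
  have hh : (harmonic n : ℝ) ≤ 1 + Real.log n := harmonic_le_one_add_log n
  have h1 : α * (harmonic n : ℝ) ≤ α * (1 + Real.log n) :=
    mul_le_mul_of_nonneg_left hh hα0.le
  calc Real.exp (α * (harmonic n : ℝ)) ≤ Real.exp (α * (1 + Real.log n)) :=
        Real.exp_le_exp.mpr h1
    _ = Real.exp α * (n : ℝ) ^ α := by
        rw [Real.rpow_def_of_pos (by exact_mod_cast hn : (0:ℝ) < (n:ℝ)),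
          ← Real.exp_add]
        ring_nf
    _ ≤ Real.exp 1 * (n : ℝ) ^ α := by
        have : (0:ℝ) ≤ (n : ℝ) ^ α := Real.rpow_nonneg (by positivity) _
        exact mul_le_mul_of_nonneg_right (Real.exp_le_exp.mpr hα1.le) this

/-- Discrete Cauchy–Schwarz bound for the convolution quadrature fractional integral
`(∂_τ^{-α} w)^n = τ^α Σ_{j=0}^n a_{n-j}^{(-α)} w_j`:
`‖(∂_τ^{-α} w)^n‖² ≤ C (nτ)^α (∂_τ^{-α} ‖w‖²)^n`, with `C` depending only on `α`. -/
theorem stmt16 (α : ℝ) (hα0 : 0 < α) (hα1 : α < 1) :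
    ∃ C > 0, ∀ (H : Type) [NormedAddCommGroup H] [InnerProductSpace ℝ H],
      ∀ τ : ℝ, 0 < τ → ∀ n : ℕ, 1 ≤ n → ∀ w : ℕ → H,
        ‖τ ^ α • ∑ j ∈ Finset.range (n + 1), cqWeight (-α) (n - j) • w j‖ ^ 2 ≤
          C * ((n : ℝ) * τ) ^ α *
            (τ ^ α * ∑ j ∈ Finset.range (n + 1), cqWeight (-α) (n - j) * ‖w j‖ ^ 2) := by
  refine ⟨Real.exp 1, Real.exp_pos 1, ?_⟩
  intro H _ _ τ hτ n hn w
  set a : ℕ → ℝ := fun k => cqWeight (-α) k with ha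
  have ha_nn : ∀ k, 0 ≤ a k := fun k => cqWeight_neg_nonneg hα0 k
  set S : ℝ := ∑ k ∈ Finset.range (n + 1), a k with hS
  have hS_nn : 0 ≤ S := Finset.sum_nonneg fun k _ => ha_nn k
  set Q : ℝ := ∑ j ∈ Finset.range (n + 1), a (n - j) * ‖w j‖ ^ 2 with hQ
  have hQ_nn : 0 ≤ Q :=
    Finset.sum_nonneg fun j _ => mul_nonneg (ha_nn _) (sq_nonneg _)
  have hτα : (0 : ℝ) < τ ^ α := Real.rpow_pos_of_pos hτ α
  -- step 1: triangle inequality then Cauchy–Schwarz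
  have h1 : ‖∑ j ∈ Finset.range (n + 1), a (n - j) • w j‖
      ≤ ∑ j ∈ Finset.range (n + 1), a (n - j) * ‖w j‖ := by
    refine (norm_sum_le _ _).trans_eq ?_
    exact Finset.sum_congr rfl fun j _ => by
      rw [norm_smul, Real.norm_eq_abs, abs_of_nonneg (ha_nn _)]
  have h2 : (∑ j ∈ Finset.range (n + 1), a (n - j) * ‖w j‖) ^ 2 ≤ S * Q := by
    have hcs := Finset.sum_mul_sq_le_sq_mul_sq (Finset.range (n + 1))
      (fun j => Real.sqrt (a (n - j))) (fun j => Real.sqrt (a (n - j)) * ‖w j‖)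
    have hleft : ∑ j ∈ Finset.range (n + 1),
        Real.sqrt (a (n - j)) * (Real.sqrt (a (n - j)) * ‖w j‖)
        = ∑ j ∈ Finset.range (n + 1), a (n - j) * ‖w j‖ := by
      refine Finset.sum_congr rfl fun j _ => ?_
      rw [← mul_assoc, Real.mul_self_sqrt (ha_nn _)]
    have hsq1 : ∑ j ∈ Finset.range (n + 1), Real.sqrt (a (n - j)) ^ 2 = S := by
      rw [hS, ← Finset.sum_range_reflect (fun j => a j) (n + 1)]
      refine Finset.sum_congr rfl fun j hj => ?_
      rw [Real.sq_sqrt (ha_nn _)]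
      have hjj : n + 1 - 1 - j = n - j := by omega
      rw [hjj]
    have hsq2 : ∑ j ∈ Finset.range (n + 1), (Real.sqrt (a (n - j)) * ‖w j‖) ^ 2 = Q := by
      refine Finset.sum_congr rfl fun j _ => ?_
      rw [mul_pow, Real.sq_sqrt (ha_nn _)]
    rw [hleft, hsq1, hsq2] at hcs
    exact hcs
  have h3 : ‖∑ j ∈ Finset.range (n + 1), a (n - j) • w j‖ ^ 2 ≤ S * Q := by
    refine le_trans ?_ h2
    exact pow_le_pow_left₀ (norm_nonneg _) h1 2
  -- step 2: bound S
  have hSle : S ≤ Real.exp 1 * (n : ℝ) ^ α := cqWeight_sum_le hα0 hα1 hn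
  -- assemble
  have hnorm : ‖τ ^ α • ∑ j ∈ Finset.range (n + 1), a (n - j) • w j‖ ^ 2
      = (τ ^ α) ^ 2 * ‖∑ j ∈ Finset.range (n + 1), a (n - j) • w j‖ ^ 2 := by
    rw [norm_smul, Real.norm_eq_abs, abs_of_pos hτα, mul_pow]
  rw [hnorm]
  have hmulrpow : ((n : ℝ) * τ) ^ α = (n : ℝ) ^ α * τ ^ α := by
    rw [Real.mul_rpow (by positivity) hτ.le]
  rw [hmulrpow]
  calc (τ ^ α) ^ 2 * ‖∑ j ∈ Finset.range (n + 1), a (n - j) • w j‖ ^ 2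
      ≤ (τ ^ α) ^ 2 * (S * Q) := by
        exact mul_le_mul_of_nonneg_left h3 (by positivity)
    _ ≤ (τ ^ α) ^ 2 * (Real.exp 1 * (n : ℝ) ^ α * Q) := by
        refine mul_le_mul_of_nonneg_left ?_ (by positivity)
        exact mul_le_mul_of_nonneg_right hSle hQ_nn
    _ = Real.exp 1 * ((n : ℝ) ^ α * τ ^ α) * (τ ^ α * Q) := by ring
end

section
/- Discrete Cauchy–Schwarz bound for the convolution quadrature integral of order 1−α: let 0<α<1. There exists a constant C>0, depending only on α, such that for every real Hilbert space H, every τ>0, every integer j≥1, and every u_0,…,u_j ∈ H, ‖(∂_τ^{α−1} u)^j‖² ≤ C (jτ)^{1−α} (∂_τ^{α−1} g)^j where g_k=‖u_k‖²; explicitly, ‖τ^{1−α} Σ_{k=0}^j a_{j−k}^{(α−1)} u_k‖² ≤ C (jτ)^{1−α} · τ^{1−α} Σ_{k=0}^j a_{j−k}^{(α−1)} ‖u_k‖². -/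
lemma cq_eq_s17 (β : ℝ) (j : ℕ) :
    cqWeight β j = (∏ i ∈ Finset.range j, ((i : ℝ) - β)) / (j.factorial : ℝ) := by
  unfold cqWeight
  have h : ∏ i ∈ Finset.range j, (β - (i:ℝ)) = (-1)^j * ∏ i ∈ Finset.range j, ((i:ℝ) - β) := by
    calc ∏ i ∈ Finset.range j, (β - (i:ℝ))
        = ∏ i ∈ Finset.range j, (-1) * ((i:ℝ) - β) :=
          Finset.prod_congr rfl fun i _ => by ring
      _ = (-1)^j * ∏ i ∈ Finset.range j, ((i:ℝ) - β) := by
          rw [Finset.prod_mul_distrib, Finset.prod_const, Finset.card_range]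
  rw [h, ← mul_div_assoc, ← mul_assoc, ← mul_pow]
  norm_num

lemma cq_pos {α : ℝ} (hα1 : α < 1) (j : ℕ) : 0 < cqWeight (α - 1) j := by
  rw [cq_eq_s17]
  apply div_pos
  · exact Finset.prod_pos fun i _ => by
      have : (0:ℝ) ≤ i := Nat.cast_nonneg i
      linarith
  · exact_mod_cast Nat.factorial_pos j

lemma cq2_pos {α : ℝ} (hα1 : α < 1) (j : ℕ) : 0 < cqWeight (α - 2) j := by
  rw [cq_eq_s17]
  apply div_pos
  · exact Finset.prod_pos fun i _ => by
      have : (0:ℝ) ≤ i := Nat.cast_nonneg i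
      linarith
  · exact_mod_cast Nat.factorial_pos j

lemma cq_sum {α : ℝ} (j : ℕ) :
    ∑ m ∈ Finset.range (j + 1), cqWeight (α - 1) m = cqWeight (α - 2) j := by
  induction j with
  | zero => simp [cq_eq_s17]
  | succ j ih =>
    rw [Finset.sum_range_succ, ih, cq_eq_s17, cq_eq_s17, cq_eq_s17]
    have hP : ∏ i ∈ Finset.range (j+1), ((i:ℝ) - (α-1))
        = (∏ i ∈ Finset.range j, ((i:ℝ) - (α-2))) * (1 - α) := by
      rw [Finset.prod_range_succ']
      congr 1
      · exact Finset.prod_congr rfl fun i _ => by push_cast; ring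
      · norm_num
    have hQ : ∏ i ∈ Finset.range (j+1), ((i:ℝ) - (α-2))
        = (∏ i ∈ Finset.range j, ((i:ℝ) - (α-2))) * ((j:ℝ) - (α-2)) := by
      rw [Finset.prod_range_succ]
    rw [hP, hQ, Nat.factorial_succ]
    have hF : ((j.factorial : ℝ)) ≠ 0 := by exact_mod_cast Nat.factorial_ne_zero j
    have hJ : ((j:ℝ) + 1) ≠ 0 := by positivity
    push_cast
    field_simp
    ring

lemma cq2_ratio {α : ℝ} (j : ℕ) (hj : 1 ≤ j) :
    cqWeight (α - 2) (j+1) = cqWeight (α - 2) j * (((j:ℝ) - (α-2)) / ((j:ℝ)+1)) := by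
  rw [cq_eq_s17, cq_eq_s17, Finset.prod_range_succ, Nat.factorial_succ]
  have hF : ((j.factorial : ℝ)) ≠ 0 := by exact_mod_cast Nat.factorial_ne_zero j
  have hJ : ((j:ℝ) + 1) ≠ 0 := by positivity
  push_cast
  field_simp
  try tauto

lemma key_ineq {α : ℝ} (hα0 : 0 < α) (hα1 : α < 1) (j : ℕ) (hj : 1 ≤ j) :
    ((j:ℝ) - (α - 2)) / ((j:ℝ) + 1) ≤ (((j:ℝ)+1) / (j:ℝ)) ^ (1 - α) := by
  have hjpos : (0:ℝ) < j := by exact_mod_cast hj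
  have hx : (0:ℝ) < ((j:ℝ)+1) / (j:ℝ) := by positivity
  have hlog : (1:ℝ)/((j:ℝ)+1) ≤ Real.log (((j:ℝ)+1) / (j:ℝ)) := by
    have h1 : Real.log ((j:ℝ) / ((j:ℝ)+1)) ≤ (j:ℝ)/((j:ℝ)+1) - 1 :=
      Real.log_le_sub_one_of_pos (by positivity)
    have h2 : Real.log ((j:ℝ) / ((j:ℝ)+1)) = - Real.log (((j:ℝ)+1) / (j:ℝ)) := by
      rw [Real.log_div (by positivity) (by positivity),
        Real.log_div (by positivity) (by positivity)]
      ring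
    have h3 : (j:ℝ)/((j:ℝ)+1) - 1 = - (1/((j:ℝ)+1)) := by field_simp; ring
    rw [h2, h3] at h1
    linarith
  have hrpow : (((j:ℝ)+1) / (j:ℝ)) ^ (1 - α)
      = Real.exp ((1 - α) * Real.log (((j:ℝ)+1) / (j:ℝ))) := by
    rw [Real.rpow_def_of_pos hx, mul_comm]
  rw [hrpow]
  have hexp : (1 - α) * Real.log (((j:ℝ)+1) / (j:ℝ)) + 1
      ≤ Real.exp ((1 - α) * Real.log (((j:ℝ)+1) / (j:ℝ))) := by
    have := Real.add_one_le_exp ((1 - α) * Real.log (((j:ℝ)+1) / (j:ℝ)))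
    linarith
  have hmul : (1 - α) * (1/((j:ℝ)+1)) ≤ (1 - α) * Real.log (((j:ℝ)+1) / (j:ℝ)) :=
    mul_le_mul_of_nonneg_left hlog (by linarith)
  have heq : ((j:ℝ) - (α - 2)) / ((j:ℝ) + 1) = 1 + (1-α) * (1/((j:ℝ)+1)) := by
    field_simp
    ring
  rw [heq]
  linarith

lemma cq2_bound {α : ℝ} (hα0 : 0 < α) (hα1 : α < 1) :
    ∀ j : ℕ, 1 ≤ j → cqWeight (α - 2) j ≤ 2 * (j:ℝ) ^ (1 - α) := by
  intro j hj
  induction j, hj using Nat.le_induction with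
  | base =>
    rw [cq_eq_s17, Finset.prod_range_one, Nat.factorial_one]
    push_cast
    rw [Real.one_rpow]
    norm_num
    linarith
  | succ j hj ih =>
    have hjpos : (0:ℝ) < j := by exact_mod_cast hj
    rw [cq2_ratio j hj]
    have hb := cq2_pos hα1 (α := α) j
    have hr : (0:ℝ) ≤ ((j:ℝ) - (α-2)) / ((j:ℝ)+1) := by
      apply div_nonneg <;> [linarith; linarith]
    calc cqWeight (α - 2) j * (((j:ℝ) - (α-2)) / ((j:ℝ)+1))
        ≤ (2 * (j:ℝ)^(1-α)) * ((((j:ℝ)+1) / (j:ℝ)) ^ (1 - α)) := by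
          apply mul_le_mul ih (key_ineq hα0 hα1 j hj) hr
          positivity
      _ = 2 * ((j:ℝ)+1) ^ (1 - α) := by
          rw [Real.div_rpow (by positivity) (by positivity)]
          field_simp
      _ = 2 * (((j:ℕ)+1 : ℕ):ℝ) ^ (1 - α) := by push_cast; ring

/-- Discrete Cauchy–Schwarz bound for the convolution quadrature integral of order `1-α`:
`‖(∂_τ^{α-1} u)^j‖² ≤ C (jτ)^{1-α} (∂_τ^{α-1} ‖u‖²)^j`, with `C` depending only on `α`. -/
theorem stmt17 (α : ℝ) (hα0 : 0 < α) (hα1 : α < 1) :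
    ∃ C > 0, ∀ (H : Type) [NormedAddCommGroup H] [InnerProductSpace ℝ H],
      ∀ τ : ℝ, 0 < τ → ∀ j : ℕ, 1 ≤ j → ∀ u : ℕ → H,
        ‖τ ^ (1 - α) • ∑ k ∈ Finset.range (j + 1), cqWeight (α - 1) (j - k) • u k‖ ^ 2 ≤
          C * ((j : ℝ) * τ) ^ (1 - α) *
            (τ ^ (1 - α) *
              ∑ k ∈ Finset.range (j + 1), cqWeight (α - 1) (j - k) * ‖u k‖ ^ 2) := by
  refine ⟨2, by norm_num, ?_⟩
  intro H _ _ τ hτ j hj u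
  set w : ℕ → ℝ := fun k => cqWeight (α - 1) (j - k) with hw
  have hwpos : ∀ k, 0 < w k := fun k => cq_pos hα1 _
  set S2 : ℝ := ∑ k ∈ Finset.range (j + 1), w k * ‖u k‖ ^ 2 with hS2
  have hS2nn : 0 ≤ S2 := Finset.sum_nonneg fun k _ => mul_nonneg (hwpos k).le (by positivity)
  set T : ℝ := ∑ k ∈ Finset.range (j + 1), w k * ‖u k‖ with hT
  -- sum of weights
  have hsum : ∑ k ∈ Finset.range (j + 1), w k ≤ 2 * (j:ℝ) ^ (1 - α) := by
    have hrefl : ∑ k ∈ Finset.range (j + 1), w k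
        = ∑ m ∈ Finset.range (j + 1), cqWeight (α - 1) m := by
      have := Finset.sum_range_reflect (fun m => cqWeight (α - 1) m) (j + 1)
      simpa using this
    rw [hrefl, cq_sum]
    exact cq2_bound hα0 hα1 j hj
  -- Cauchy-Schwarz
  have hCS : T ^ 2 ≤ (∑ k ∈ Finset.range (j + 1), w k) * S2 := by
    have := Finset.sum_mul_sq_le_sq_mul_sq (Finset.range (j+1))
      (fun k => Real.sqrt (w k)) (fun k => Real.sqrt (w k) * ‖u k‖)
    have e1 : ∀ k, Real.sqrt (w k) * (Real.sqrt (w k) * ‖u k‖) = w k * ‖u k‖ := by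
      intro k
      rw [← mul_assoc, Real.mul_self_sqrt (hwpos k).le]
    have e2 : ∀ k, Real.sqrt (w k) ^ 2 = w k := fun k => Real.sq_sqrt (hwpos k).le
    have e3 : ∀ k, (Real.sqrt (w k) * ‖u k‖) ^ 2 = w k * ‖u k‖ ^ 2 := by
      intro k; rw [mul_pow, e2]
    simp only [e1, e2, e3] at this
    exact this
  -- triangle inequality
  have hv : ‖∑ k ∈ Finset.range (j + 1), w k • u k‖ ≤ T := by
    refine (norm_sum_le _ _).trans ?_
    rw [hT]
    apply Finset.sum_le_sum
    intro k _
    rw [norm_smul, Real.norm_eq_abs, abs_of_pos (hwpos k)]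
  have hTnn : 0 ≤ T := Finset.sum_nonneg fun k _ => mul_nonneg (hwpos k).le (norm_nonneg _)
  have hv2 : ‖∑ k ∈ Finset.range (j + 1), w k • u k‖ ^ 2 ≤ T ^ 2 :=
    pow_le_pow_left₀ (norm_nonneg _) hv 2
  have hkey : ‖∑ k ∈ Finset.range (j + 1), w k • u k‖ ^ 2
      ≤ 2 * (j:ℝ) ^ (1 - α) * S2 := by
    refine hv2.trans (hCS.trans ?_)
    exact mul_le_mul_of_nonneg_right hsum hS2nn
  -- assemble
  have hτp : (0:ℝ) < τ ^ (1 - α) := Real.rpow_pos_of_pos hτ _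
  rw [norm_smul, Real.norm_eq_abs, abs_of_pos hτp, mul_pow]
  have hjτ : ((j : ℝ) * τ) ^ (1 - α) = (j:ℝ) ^ (1 - α) * τ ^ (1 - α) :=
    Real.mul_rpow (Nat.cast_nonneg j) hτ.le
  rw [hjτ]
  calc (τ ^ (1 - α)) ^ 2 * ‖∑ k ∈ Finset.range (j + 1), w k • u k‖ ^ 2
      ≤ (τ ^ (1 - α)) ^ 2 * (2 * (j:ℝ) ^ (1 - α) * S2) :=
        mul_le_mul_of_nonneg_left hkey (by positivity)
    _ = 2 * ((j:ℝ) ^ (1 - α) * τ ^ (1 - α)) * (τ ^ (1 - α) * S2) := by ring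
end
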